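/- For every Young diagram λ inside the k×(n−k) rectangle, the sequence w_λ·𝟏 ∈ E has pluses exactly at the positions a(i) = k + λ_i − i + 1 for 1 ≤ i ≤ k (and minuses at all other positions). -/

import Mathlib

open scoped Classical

set_option maxHeartbeats 1000000
set_option synthInstance.maxHeartbeats 1000000

noncomputable section

/-- The field ℚ(v) of rational functions. -/
abbrev F : Type := RatFunc ℚ

/-- The variable v. -/
def v : F := RatFunc.X

/-- The quantum integer [r] = (v^r - v^{-r})/(v - v^{-1}). -/
def qint (r : ℕ) : F := (v ^ r - v⁻¹ ^ r) / (v - v⁻¹)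

/-- Sequences of n signs (`true` = `+`) with exactly k pluses. -/
abbrev Stt (n k : ℕ) := {ε : Fin n → Bool // (Finset.univ.filter fun t => ε t = true).card = k}

/-- The adjacent transposition s_m ∈ S_n (1-based: swaps positions m and m+1). -/
def sperm (n m : ℕ) : Equiv.Perm (Fin n) :=
  if h : 1 ≤ m ∧ m < n then Equiv.swap ⟨m - 1, by omega⟩ ⟨m, h.2⟩ else 1

/-- Action of w ∈ S_n on sequences: (w·ε)_{w(t)} = ε_t. -/
def actE {n : ℕ} (w : Equiv.Perm (Fin n)) (ε : Fin n → Bool) : Fin n → Bool :=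
  fun u => ε (w⁻¹ u)

lemma card_actE {n k : ℕ} (w : Equiv.Perm (Fin n)) (ε : Fin n → Bool)
    (h : (Finset.univ.filter fun t => ε t = true).card = k) :
    (Finset.univ.filter fun t => actE w ε t = true).card = k := by
  rw [← h]
  apply Finset.card_bij (fun t _ => w⁻¹ t)
  · intro a ha
    exact Finset.mem_filter.mpr ⟨Finset.mem_univ _, (Finset.mem_filter.mp ha).2⟩
  · intro a _ b _ hab
    exact (Equiv.injective _) hab
  · intro b hb
    refine ⟨w b, Finset.mem_filter.mpr ⟨Finset.mem_univ _, ?_⟩, by simp⟩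
    show ε (w⁻¹ (w b)) = true
    simpa using (Finset.mem_filter.mp hb).2

/-- Action of S_n on the set E of sequences with k pluses. -/
def actS {n k : ℕ} (w : Equiv.Perm (Fin n)) (ε : Stt n k) : Stt n k :=
  ⟨actE w ε.1, card_actE w ε.1 ε.2⟩

/-- The module M, free over ℚ(v) with basis E. -/
abbrev M (n k : ℕ) := Stt n k → F

/-- The basis vector of M corresponding to ε ∈ E. -/
def bv {n k : ℕ} (ε : Stt n k) : M n k := Pi.single ε 1

/-- The sequence 𝟏 = (+,…,+,−,…,−) (k pluses then n−k minuses). -/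
def oneSeq (n k : ℕ) : Fin n → Bool := fun t => decide ((t : ℕ) < k)

lemma card_oneSeq (n k : ℕ) (h : k ≤ n) :
    (Finset.univ.filter fun t => oneSeq n k t = true).card = k := by
  have : (Finset.univ.filter fun t => oneSeq n k t = true)
      = Finset.univ.map (Fin.castLEEmb h) := by
    ext t
    simp only [Finset.mem_filter, Finset.mem_univ, true_and, oneSeq, decide_eq_true_eq,
      Finset.mem_map]
    constructor
    · intro ht; exact ⟨⟨t, ht⟩, rfl⟩
    · rintro ⟨s, rfl⟩; exact s.2
  rw [this, Finset.card_map, Finset.card_univ, Fintype.card_fin]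

/-- 𝟏 as an element of E. -/
def oneS (n k : ℕ) (h : k ≤ n) : Stt n k := ⟨oneSeq n k, card_oneSeq n k h⟩

/-- The operator T_m on M (1 ≤ m ≤ n−1), defined on basis elements. -/
def Thk (n k : ℕ) (m : ℕ) : M n k →ₗ[F] M n k :=
  (Pi.basisFun F (Stt n k)).constr ℕ fun ε =>
    if h : 1 ≤ m ∧ m < n then
      let a := ε.1 ⟨m - 1, by omega⟩
      let b := ε.1 ⟨m, h.2⟩
      if a = true ∧ b = false then bv (actS (sperm n m) ε)
      else if a = b then (-v⁻¹) • bv ε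
      else bv (actS (sperm n m) ε) + (v - v⁻¹) • bv ε
    else 0

/-- A Young diagram inside the k×(n−k) rectangle, given by its row lengths
(1-based: row i has lam i boxes). -/
def IsYoung (n k : ℕ) (lam : ℕ → ℕ) : Prop :=
  (∀ i, 1 ≤ i → lam (i + 1) ≤ lam i) ∧ lam 1 ≤ n - k ∧ (∀ i, k < i → lam i = 0)

/-- The boxes of λ, listed row by row from the bottom row to the top row,
each row from its last box to its first (so box (1,1) comes last). -/
def boxList (k : ℕ) (lam : ℕ → ℕ) : List (ℕ × ℕ) :=
  ((List.range k).reverse.map fun i' =>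
    (List.range (lam (i' + 1))).reverse.map fun j' => (i' + 1, j' + 1)).flatten

/-- The word of w_λ: letter k+j−i for box (i,j). -/
def wword (k : ℕ) (lam : ℕ → ℕ) : List ℕ := (boxList k lam).map fun b => k + b.2 - b.1

/-- The permutation w_λ = ∏_{(i,j)∈λ} s_{k+j−i} (box (1,1) rightmost). -/
def wperm (n k : ℕ) (lam : ℕ → ℕ) : Equiv.Perm (Fin n) := ((wword k lam).map (sperm n)).prod

/-- w_λ·𝟏 as an element of E. -/
def wSt (n k : ℕ) (h : k ≤ n) (lam : ℕ → ℕ) : Stt n k := actS (wperm n k lam) (oneS n k h)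

/-- r is the system of shifts of λ: r_{ij} = max(r_{i,j+1}, r_{i+1,j}) + 1 on boxes of λ,
and r_{ij} = 0 off λ. -/
def IsShifts (lam : ℕ → ℕ) (r : ℕ → ℕ → ℕ) : Prop :=
  ∀ i j, r i j = if 1 ≤ i ∧ 1 ≤ j ∧ j ≤ lam i then max (r i (j + 1)) (r (i + 1) j) + 1 else 0

/-- The operator X_λ = ∏_{(i,j)∈λ} (T_{k+j−i} − v^{r_{ij}}/[r_{ij}]), the factor of
box (1,1) applied first. -/
def Xop (n k : ℕ) (lam : ℕ → ℕ) (r : ℕ → ℕ → ℕ) : Module.End F (M n k) :=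
  ((boxList k lam).map fun b =>
    (Thk n k (k + b.2 - b.1) - (v ^ r b.1 b.2 / qint (r b.1 b.2)) • (1 : Module.End F (M n k)) : Module.End F (M n k))).prod

/-- O(v^m): rational functions with a zero of order ≥ m at v = 0. -/
def Ozero (m : ℕ) : Set F :=
  {f | ∃ p q : Polynomial ℚ, Polynomial.eval 0 q ≠ 0 ∧
        f = v ^ m * (algebraMap (Polynomial ℚ) F p / algebraMap (Polynomial ℚ) F q)}

/-- Value of a sequence at the 1-based position t. -/
def posVal {n : ℕ} (ε : Fin n → Bool) (t : ℕ) : Bool :=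
  if h : 1 ≤ t ∧ t ≤ n then ε ⟨t - 1, by omega⟩ else false

/-- a(i) = k + λ_i − i + 1 for 1 ≤ i ≤ k, and a(i) = 0 for i > k. -/
def aF (k : ℕ) (lam : ℕ → ℕ) (i : ℕ) : ℕ := if i ≤ k then k + lam i + 1 - i else 0

/-- The contribution r_t(ε) to the weight. -/
def weightT (k : ℕ) (lam : ℕ → ℕ) (r : ℕ → ℕ → ℕ) {n : ℕ} (ε : Fin n → Bool) (t : ℕ) : ℕ :=
  ∑ i ∈ Finset.Icc 1 k,
    ((if posVal ε t = false ∧ 1 ≤ lam i ∧ t = aF k lam i then r i (lam i) - 1 else 0) +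
     (if posVal ε t = true ∧ aF k lam (i + 1) < t ∧ t < aF k lam i then r i (t + i - k) else 0))

/-- The weight r_λ(ε) = Σ_{t=1}^n r_t(ε). -/
def weight (n k : ℕ) (lam : ℕ → ℕ) (r : ℕ → ℕ → ℕ) (ε : Fin n → Bool) : ℕ :=
  ∑ t ∈ Finset.Icc 1 n, weightT k lam r ε t

/-- 𝓛_λ = Σ_ε O(v^{r_λ(ε)}) ε. -/
def Lset (n k : ℕ) (lam : ℕ → ℕ) (r : ℕ → ℕ → ℕ) : Set (M n k) :=
  {m | ∀ ε : Stt n k, m ε ∈ Ozero (weight n k lam r ε.1)}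

/-- The length (number of inversions) of a permutation. -/
def len {n : ℕ} (w : Equiv.Perm (Fin n)) : ℕ :=
  (Finset.univ.filter fun p : Fin n × Fin n => p.1 < p.2 ∧ w p.2 < w p.1).card

/-- The parabolic subgroup W_J = S_k × S_{n−k}: permutations mapping {1,…,k} to itself. -/
def WJ (n k : ℕ) : Set (Equiv.Perm (Fin n)) :=
  {σ | ∀ t : Fin n, (t : ℕ) < k → ((σ t : ℕ) < k)}

/-- W^J: permutations of minimal length in their coset w·W_J. -/
def Wmin (n k : ℕ) : Set (Equiv.Perm (Fin n)) :=
  {w | ∀ σ ∈ WJ n k, len w ≤ len (w * σ)}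

/-- The variable x_p (1-based position p) in ℚ(v)[x_1,…,x_n]. -/
def xv (n p : ℕ) : MvPolynomial (Fin n) F :=
  if h : 1 ≤ p ∧ p ≤ n then MvPolynomial.X ⟨p - 1, by omega⟩ else 0

/-- Exchange of the variables x_i and x_{i+1} (1-based, 1 ≤ i ≤ n−1). -/
def swapf (n i : ℕ) (f : MvPolynomial (Fin n) F) : MvPolynomial (Fin n) F :=
  if h : 1 ≤ i ∧ i < n then
    MvPolynomial.rename (Equiv.swap ⟨i - 1, by omega⟩ ⟨i, h.2⟩) f
  else f

/-- The divided difference ∂_i f = (f − s_i f)/(x_i − x_{i+1}). -/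
def ddiff (n i : ℕ) (f : MvPolynomial (Fin n) F) : MvPolynomial (Fin n) F :=
  if h : ∃ g, f - swapf n i f = (xv n i - xv n (i + 1)) * g then h.choose else 0

/-- The operator ∇_i f = (v x_{i+1} − v⁻¹ x_i)·∂_i f. -/
def nabla (n i : ℕ) (f : MvPolynomial (Fin n) F) : MvPolynomial (Fin n) F :=
  (MvPolynomial.C v * xv n (i + 1) - MvPolynomial.C v⁻¹ * xv n i) * ddiff n i f

/-- Parenthesis matching: minuses (`false`) are openers, pluses (`true`) are closers;
each plus is matched with the most recent unmatched minus, i.e. each minus with the first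
subsequent unmatched plus.  Returns the list of matched pairs (p,q) of 1-based positions
and the list of unmatched minus positions. -/
def matchAux : List Bool → ℕ → List ℕ → List (ℕ × ℕ) × List ℕ
  | [], _, stack => ([], stack)
  | b :: rest, pos, stack =>
    if b then
      match stack with
      | [] => matchAux rest (pos + 1) []
      | p :: stack' =>
        let res := matchAux rest (pos + 1) stack'
        ((p, pos) :: res.1, res.2)
    else matchAux rest (pos + 1) (pos :: stack)

/-- d(ε) = #{(p,q) : p < q, ε_p = −, ε_q = +}. -/
def dstat {n : ℕ} (ε : Fin n → Bool) : ℕ :=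
  (Finset.univ.filter fun pq : Fin n × Fin n =>
    pq.1 < pq.2 ∧ ε pq.1 = false ∧ ε pq.2 = true).card

/-- The polynomial Q_ε. -/
def Qpoly (n : ℕ) (ε : Fin n → Bool) : MvPolynomial (Fin n) F :=
  MvPolynomial.C (v⁻¹ ^ dstat ε) *
    ((matchAux (List.ofFn ε) 1 []).1.map fun pq =>
        xv n pq.1 - MvPolynomial.C (v ^ (pq.2 + 1 - pq.1)) * xv n pq.2).prod *
    ((matchAux (List.ofFn ε) 1 []).2.map fun p => xv n p).prod

/-- The operator T_m on M′ (the parabolic module induced from T_j ↦ v). -/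
def Thk' (n k : ℕ) (m : ℕ) : M n k →ₗ[F] M n k :=
  (Pi.basisFun F (Stt n k)).constr ℕ fun ε =>
    if h : 1 ≤ m ∧ m < n then
      let a := ε.1 ⟨m - 1, by omega⟩
      let b := ε.1 ⟨m, h.2⟩
      if a = true ∧ b = false then bv (actS (sperm n m) ε)
      else if a = b then v • bv ε
      else bv (actS (sperm n m) ε) + (v - v⁻¹) • bv ε
    else 0

/-- The map Φ : M′ → ℚ(v)[x_1,…,x_n], ε ↦ v^{−d(ε)} ∏_{t : ε_t = −} x_t. -/
def Phi (n k : ℕ) : M n k →ₗ[F] MvPolynomial (Fin n) F :=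
  (Pi.basisFun F (Stt n k)).constr ℕ fun ε =>
    MvPolynomial.C (v⁻¹ ^ dstat ε.1) *
      ∏ t ∈ Finset.univ.filter (fun t => ε.1 t = false), MvPolynomial.X t

/-- The space P(k,n): polynomials homogeneous of total degree n−k, of degree ≤ 1 in each
variable. -/
def Pspace (n k : ℕ) : Set (MvPolynomial (Fin n) F) :=
  {f | f.IsHomogeneous (n - k) ∧ ∀ t : Fin n, f.degreeOf t ≤ 1}



lemma chain_apply (n b : ℕ) (hb : 1 ≤ b) :
    ∀ l, b + l ≤ n → ∀ p : Fin n,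
    ((((List.range l).reverse.map fun j => sperm n (b + j)).prod p : Fin n) : ℕ) =
      if (p : ℕ) = b - 1 then b - 1 + l
      else if b - 1 < (p : ℕ) ∧ (p : ℕ) ≤ b - 1 + l then (p : ℕ) - 1 else (p : ℕ) := by
  intro l
  induction l with
  | zero =>
    intro _ p
    simp only [List.range_zero, List.reverse_nil, List.map_nil, List.prod_nil,
      Equiv.Perm.one_apply]
    split_ifs <;> omega
  | succ l ih =>
    intro hln p
    have hln' : b + l ≤ n := by omega
    rw [List.range_succ, List.reverse_append]
    simp only [List.reverse_singleton, List.singleton_append, List.map_cons, List.prod_cons,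
      Equiv.Perm.mul_apply]
    have hq := ih hln' p
    set q := ((List.range l).reverse.map fun j => sperm n (b + j)).prod p with hqdef
    have hs : 1 ≤ b + l ∧ b + l < n := ⟨by omega, by omega⟩
    rw [sperm, dif_pos hs]
    by_cases h1 : (q : ℕ) = b + l - 1
    · have hq1 : q = ⟨b + l - 1, by omega⟩ := Fin.ext h1
      rw [hq1, Equiv.swap_apply_left]
      simp only [Fin.val_mk] at *
      split_ifs at hq ⊢ <;> omega
    · by_cases h2 : (q : ℕ) = b + l
      · have hq2 : q = ⟨b + l, hs.2⟩ := Fin.ext h2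
        rw [hq2, Equiv.swap_apply_right]
        simp only [Fin.val_mk] at *
        split_ifs at hq ⊢ <;> omega
      · rw [Equiv.swap_apply_of_ne_of_ne (by intro h; apply h1; rw [h])
          (by intro h; apply h2; rw [h])]
        split_ifs at hq ⊢ <;> omega

def Wm (n k : ℕ) (lam : ℕ → ℕ) (m : ℕ) : Equiv.Perm (Fin n) :=
  ((List.range m).reverse.map fun i' =>
    ((List.range (lam (i' + 1))).reverse.map fun j' =>
      sperm n (k + (j' + 1) - (i' + 1))).prod).prod

lemma wperm_eq_Wm (n k : ℕ) (lam : ℕ → ℕ) : wperm n k lam = Wm n k lam k := by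
  unfold wperm wword boxList Wm
  rw [List.map_map, List.map_flatten, List.prod_flatten, List.map_map, List.map_map]
  congr 1
  apply List.map_congr_left
  intro i' _
  simp [Function.comp, List.map_map]
  rfl

lemma row_eq (n k i' : ℕ) (h : i' < k) (l : ℕ) :
    ((List.range l).reverse.map fun j' => sperm n (k + (j' + 1) - (i' + 1))).prod
      = ((List.range l).reverse.map fun j => sperm n ((k - i') + j)).prod := by
  congr 1
  apply List.map_congr_left
  intro j hj
  congr 1
  omega

lemma Wm_apply (n k : ℕ) (hkn : k < n) (lam : ℕ → ℕ) (hY : IsYoung n k lam) :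
    ∀ m, m ≤ k → ∀ i : Fin n, (i : ℕ) < k →
      ((Wm n k lam m i : Fin n) : ℕ) =
        if k - m ≤ (i : ℕ) then lam (k - (i : ℕ)) + (i : ℕ) else (i : ℕ) := by
  have hmono : ∀ a b : ℕ, 1 ≤ a → a ≤ b → lam b ≤ lam a := by
    intro a b ha hab
    induction hab with
    | refl => exact le_rfl
    | step h ih => exact le_trans (hY.1 _ (le_trans ha h)) ih
  have hlam1 : lam 1 ≤ n - k := hY.2.1
  intro m
  induction m with
  | zero =>
    intro _ i hik
    simp only [Wm, List.range_zero, List.reverse_nil, List.map_nil, List.prod_nil,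
      Equiv.Perm.one_apply]
    rw [if_neg (by omega)]
  | succ m ih =>
    intro hm i hik
    have hm' : m ≤ k := by omega
    have hWm : Wm n k lam (m + 1) =
        (((List.range (lam (m + 1))).reverse.map fun j' =>
          sperm n (k + (j' + 1) - (m + 1))).prod) * Wm n k lam m := by
      unfold Wm
      rw [List.range_succ, List.reverse_append]
      simp only [List.reverse_singleton, List.singleton_append, List.map_cons, List.prod_cons]
    rw [hWm, Equiv.Perm.mul_apply, row_eq n k m (by omega)]
    have hb1 : 1 ≤ k - m := by omega
    have hbl : (k - m) + lam (m + 1) ≤ n := by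
      have := hmono 1 (m + 1) le_rfl (by omega)
      omega
    have hq := ih hm' i hik
    rw [chain_apply n (k - m) hb1 (lam (m + 1)) hbl]
    by_cases hcase : k - m ≤ (i : ℕ)
    · rw [if_pos hcase] at hq
      have hge : lam (m + 1) ≤ lam (k - (i : ℕ)) := hmono _ _ (by omega) (by omega)
      rw [hq, if_neg (by omega), if_neg (by omega), if_pos (by omega)]
    · rw [if_neg hcase] at hq
      rw [hq]
      by_cases he : (i : ℕ) = k - m - 1
      · rw [if_pos he, if_pos (by omega)]
        have hki : k - (i : ℕ) = m + 1 := by omega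
        rw [hki]
        omega
      · rw [if_neg he, if_neg (by omega), if_neg (by omega)]

lemma wperm_apply (n k : ℕ) (hk : 0 < k) (hkn : k < n) (lam : ℕ → ℕ)
    (hY : IsYoung n k lam) (i : Fin n) (hik : (i : ℕ) < k) :
    ((wperm n k lam i : Fin n) : ℕ) = lam (k - (i : ℕ)) + (i : ℕ) := by
  rw [wperm_eq_Wm, Wm_apply n k hkn lam hY k le_rfl i hik, if_pos (by omega)]


/-- w_λ·𝟏 has pluses exactly at the positions a(i) = k + λ_i − i + 1,
1 ≤ i ≤ k. -/
theorem wSt_plus_positions (n k : ℕ) (hk : 0 < k) (hkn : k < n)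
    (lam : ℕ → ℕ) (hY : IsYoung n k lam) :
    ∀ t : Fin n,
      ((wSt n k hkn.le lam).1 t = true ↔
        ∃ i, 1 ≤ i ∧ i ≤ k ∧ (t : ℕ) + 1 = k + lam i + 1 - i) := by
  have hmono : ∀ a b : ℕ, 1 ≤ a → a ≤ b → lam b ≤ lam a := by
    intro a b ha hab
    induction hab with
    | refl => exact le_rfl
    | step h ih => exact le_trans (hY.1 _ (le_trans ha h)) ih
  intro t
  simp only [wSt, actS, actE, oneS, oneSeq, decide_eq_true_eq]
  constructor
  · intro h
    set j := (wperm n k lam)⁻¹ t with hj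
    have hwj : wperm n k lam j = t := by simp [hj]
    have hv := wperm_apply n k hk hkn lam hY j h
    rw [hwj] at hv
    refine ⟨k - (j : ℕ), by omega, by omega, ?_⟩
    have h1 : 1 ≤ k - (j : ℕ) := by omega
    have h2 : k - (k - (j : ℕ)) = (j : ℕ) := by omega
    set L := lam (k - (j : ℕ))
    omega
  · rintro ⟨i, hi1, hik2, ht⟩
    have hjn : k - i < n := by omega
    have hv := wperm_apply n k hk hkn lam hY ⟨k - i, hjn⟩ (by simp; omega)
    have hki : k - (k - i) = i := by omega
    simp only [Fin.val_mk] at hv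
    rw [hki] at hv
    have htv : (t : ℕ) = lam i + (k - i) := by
      have hL : lam i ≤ n - k := le_trans (hmono 1 i le_rfl hi1) hY.2.1
      set L := lam i
      omega
    have hwj : wperm n k lam ⟨k - i, hjn⟩ = t := Fin.ext (by rw [hv]; exact htv.symm)
    have hinv : (wperm n k lam)⁻¹ t = ⟨k - i, hjn⟩ := by rw [← hwj]; simp
    rw [hinv]
    simp
    omega

end
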